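/- arXiv:2508.03261 — 3 statements merged into one kernel-verified Lean document; each statement's English description precedes it below -/
import Mathlib

section
/- For an [n,k] stabilizer code with perfect error-correcting channel Λ(ρ) = Σ_m P_m Π_m ρ Π_m P_m, the eigenspectrum of Λ (as a linear map on 2^n × 2^n matrices) consists of 0 and 1, with multiplicities 4^n − 4^k and 4^k respectively. -/
open Matrix

/-- Abstract data of an `[n,k]` stabilizer code: commuting Hermitian involutions
`S j` (the stabilizer generators), Hermitian Pauli recovery operators `P m` with
`P 0 = 1` and pairwise-distinct syndromes `ν m`, satisfying the commutation relations
`P m * S j = (-1)^(ν m j) • (S j * P m)`. -/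
structure StabCode (n k : ℕ) where
  S : Fin (n - k) → Matrix (Fin (2 ^ n)) (Fin (2 ^ n)) ℂ
  S_herm : ∀ j, (S j).IsHermitian
  S_invol : ∀ j, S j * S j = 1
  S_comm : ∀ j j', S j * S j' = S j' * S j
  ν : Fin (2 ^ (n - k)) → Fin (n - k) → Bool
  ν_inj : Function.Injective ν
  ν_zero : ∀ j, ν 0 j = false
  P : Fin (2 ^ (n - k)) → Matrix (Fin (2 ^ n)) (Fin (2 ^ n)) ℂ
  P_herm : ∀ m, (P m).IsHermitian
  P_invol : ∀ m, P m * P m = 1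
  P_zero : P 0 = 1
  P_S_comm : ∀ m j, P m * S j = (if ν m j then (-1 : ℂ) else 1) • (S j * P m)

namespace StabCode

variable {n k : ℕ}

/-- The sign `(-1)^(ν m j)`. -/
def sign (C : StabCode n k) (m : Fin (2 ^ (n - k))) (j : Fin (n - k)) : ℂ :=
  if C.ν m j then -1 else 1

/-- The projector `Π_m = ∏_j (1 + (-1)^(ν m j) • S j) / 2` onto the simultaneous
eigenspace of the stabilizer generators with signs `(-1)^(ν m j)`. -/
noncomputable def Proj (C : StabCode n k) (m : Fin (2 ^ (n - k))) :
    Matrix (Fin (2 ^ n)) (Fin (2 ^ n)) ℂ :=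
  ((2 : ℂ) ^ (n - k))⁻¹ •
    Finset.univ.noncommProd
      (fun j => (1 : Matrix (Fin (2 ^ n)) (Fin (2 ^ n)) ℂ) + C.sign m j • C.S j)
      (by
        intro a _ b _ _
        simp only [Function.onFun]
        have hc : Commute (C.S a) (C.S b) := C.S_comm a b
        have h1 : Commute (C.sign m a • C.S a) (C.sign m b • C.S b) :=
          (hc.smul_left _).smul_right _
        exact Commute.add_left (Commute.one_left _)
          (Commute.add_right (Commute.one_right _) h1))

/-- The error-correcting channel `Λ(ρ) = Σ_m P_m Π_m ρ Π_m P_m`, as a linear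
endomorphism of the matrix space. -/
noncomputable def chan (C : StabCode n k) :
    Matrix (Fin (2 ^ n)) (Fin (2 ^ n)) ℂ →ₗ[ℂ] Matrix (Fin (2 ^ n)) (Fin (2 ^ n)) ℂ where
  toFun ρ := ∑ m, C.P m * C.Proj m * ρ * (C.Proj m * C.P m)
  map_add' x y := by simp [mul_add, add_mul, Finset.sum_add_distrib]
  map_smul' c x := by simp [Finset.smul_sum, Matrix.mul_smul, Matrix.smul_mul]

end StabCode

section Aux

open Polynomial Module LinearMap in
private lemma charpoly_idem {V : Type*} [AddCommGroup V] [Module ℂ V]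
    [FiniteDimensional ℂ V] (f : V →ₗ[ℂ] V) (hf : f ∘ₗ f = f) :
    (LinearMap.charpoly f
      = X ^ (finrank ℂ V - finrank ℂ (LinearMap.range f))
        * (X - 1) ^ finrank ℂ (LinearMap.range f))
    ∧ trace ℂ V f = (finrank ℂ (LinearMap.range f) : ℂ) := by
  classical
  set p := LinearMap.range f with hp
  have hproj : IsProj p f := by
    refine ⟨fun x => mem_range_self f x, ?_⟩
    rintro x ⟨y, rfl⟩
    exact congrFun (congrArg DFunLike.coe hf) y
  have hcompl : IsCompl (LinearMap.ker f) p := hproj.isCompl.symm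
  have hdim : finrank ℂ p + finrank ℂ (LinearMap.ker f) = finrank ℂ V :=
    f.finrank_range_add_finrank_ker
  set r := finrank ℂ p with hr
  set s := finrank ℂ (LinearMap.ker f) with hs
  let bk : Basis (Fin s) ℂ (LinearMap.ker f) := finBasis ℂ (LinearMap.ker f)
  let br : Basis (Fin r) ℂ p := finBasis ℂ p
  let e : ((LinearMap.ker f) × p) ≃ₗ[ℂ] V := Submodule.prodEquivOfIsCompl _ _ hcompl
  let b : Basis (Fin s ⊕ Fin r) ℂ V := (bk.prod br).map e
  have hbl : ∀ i, b (Sum.inl i) = (bk i : V) := by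
    intro i
    simp [b, e, Basis.prod_apply, Submodule.coe_prodEquivOfIsCompl]
  have hbr : ∀ i, b (Sum.inr i) = (br i : V) := by
    intro i
    simp [b, e, Basis.prod_apply, Submodule.coe_prodEquivOfIsCompl]
  have hf0 : ∀ i, f (b (Sum.inl i)) = 0 := by
    intro i; rw [hbl]; exact (bk i).2
  have hf1 : ∀ i, f (b (Sum.inr i)) = b (Sum.inr i) := by
    intro i; rw [hbr]; exact hproj.map_id _ (br i).2
  set d : Fin s ⊕ Fin r → ℂ := Sum.elim (fun _ => 0) (fun _ => 1) with hd
  have hM : LinearMap.toMatrix b b f = Matrix.diagonal d := by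
    ext i j
    rw [LinearMap.toMatrix_apply]
    cases j with
    | inl j =>
        rcases eq_or_ne i (Sum.inl j) with rfl | h
        · simp [hf0, Matrix.diagonal_apply, hd]
        · simp [hf0, Matrix.diagonal_apply, hd, h]
    | inr j =>
        rw [hf1]
        rcases eq_or_ne i (Sum.inr j) with rfl | h
        · simp [Basis.repr_self, Matrix.diagonal_apply, hd]
        · simp [Basis.repr_self, Matrix.diagonal_apply, hd, h, Finsupp.single_apply, Ne.symm h]
  have hchar : (Matrix.diagonal d).charpoly = X ^ s * (X - 1) ^ r := by
    have hcm : Matrix.charmatrix (Matrix.diagonal d)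
        = Matrix.diagonal (fun i => (X : ℂ[X]) - C (d i)) := by
      ext i j
      by_cases h : i = j
      · subst h; simp [Matrix.charmatrix_apply_eq, Matrix.diagonal_apply]
      · simp [Matrix.charmatrix_apply_ne _ _ _ h, Matrix.diagonal_apply, h]
    rw [Matrix.charpoly, hcm, Matrix.det_diagonal, Fintype.prod_sum_type]
    simp [hd]
  constructor
  · rw [← LinearMap.charpoly_toMatrix f b, hM, hchar]
    congr 1
    · congr 1; omega
  · rw [LinearMap.trace_eq_matrix_trace ℂ b, hM]
    simp [Matrix.trace, Matrix.diag, hd]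

private lemma trace_sandwich {N : ℕ} (A B : Matrix (Fin N) (Fin N) ℂ) :
    LinearMap.trace ℂ _ ((LinearMap.mulRight ℂ B).comp (LinearMap.mulLeft ℂ A))
      = A.trace * B.trace := by
  classical
  set b := Matrix.stdBasis ℂ (Fin N) (Fin N) with hb
  rw [LinearMap.trace_eq_matrix_trace ℂ b]
  have key : ∀ p : Fin N × Fin N,
      (LinearMap.toMatrix b b ((LinearMap.mulRight ℂ B).comp (LinearMap.mulLeft ℂ A))) p p
        = A p.1 p.1 * B p.2 p.2 := by
    intro p
    rw [LinearMap.toMatrix_apply]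
    have hbp : ∀ q : Fin N × Fin N, b q = Matrix.single q.1 q.2 (1 : ℂ) := fun q =>
      Matrix.stdBasis_eq_single ℂ q.1 q.2
    have hexp : A * Matrix.single p.1 p.2 (1 : ℂ) * B
        = ∑ q : Fin N × Fin N, (A q.1 p.1 * B p.2 q.2) • b q := by
      ext a c
      rw [Matrix.sum_apply]
      simp only [hbp, Matrix.smul_apply, smul_eq_mul]
      rw [Fintype.sum_prod_type]
      simp [Matrix.mul_apply, Matrix.single, ite_and, Finset.sum_ite_eq,
        Finset.sum_ite_eq', mul_comm]
    simp only [LinearMap.comp_apply, LinearMap.mulLeft_apply, LinearMap.mulRight_apply]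
    rw [hbp p, hexp, Module.Basis.repr_sum_self]
  rw [Matrix.trace]
  simp only [Matrix.diag]
  rw [Fintype.sum_prod_type]
  simp only [key]
  rw [Matrix.trace, Matrix.trace, Finset.sum_mul_sum]
  rfl

set_option maxHeartbeats 1000000 in
section
set_option synthInstance.maxHeartbeats 400000

namespace StabCode
variable {n k : ℕ} (C : StabCode n k)

/-- sign of a bool -/
def scSign (b : Bool) : ℂ := if b then -1 else 1

/-- a single projector factor -/
noncomputable def fac (b : Fin (n - k) → Bool) (j : Fin (n - k)) :
    Matrix (Fin (2 ^ n)) (Fin (2 ^ n)) ℂ :=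
  1 + scSign (b j) • C.S j

lemma fac_commute (b b' : Fin (n - k) → Bool) (j j' : Fin (n - k)) :
    Commute (C.fac b j) (C.fac b' j') := by
  have hc : Commute (C.S j) (C.S j') := C.S_comm j j'
  have h1 : Commute (scSign (b j) • C.S j) (scSign (b' j') • C.S j') :=
    (hc.smul_left _).smul_right _
  exact Commute.add_left (Commute.one_left _)
    (Commute.add_right (Commute.one_right _) h1)

/-- the (unnormalized) projector associated to a sign pattern -/
noncomputable def Qmat (b : Fin (n - k) → Bool) :
    Matrix (Fin (2 ^ n)) (Fin (2 ^ n)) ℂ :=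
  Finset.univ.noncommProd (C.fac b) fun j _ j' _ _ => C.fac_commute b b j j'

lemma fac_mul_self (b : Fin (n - k) → Bool) (j : Fin (n - k)) :
    C.fac b j * C.fac b j = (2 : ℂ) • C.fac b j := by
  have h2 : scSign (b j) • C.S j * (scSign (b j) • C.S j) = 1 := by
    rw [Matrix.smul_mul, Matrix.mul_smul, C.S_invol, smul_smul]
    cases hb : b j <;> norm_num [scSign]
  simp only [fac]
  generalize scSign (b j) • C.S j = a at h2 ⊢
  have key : (1 + a) * (1 + a) = (1 + a) + (a + a * a) := by noncomm_ring
  rw [key, h2, two_smul]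
  abel

lemma fac_mul_opp (b b' : Fin (n - k) → Bool) (j : Fin (n - k)) (h : b j ≠ b' j) :
    C.fac b j * C.fac b' j = 0 := by
  have hs : scSign (b' j) = - scSign (b j) := by
    cases hb : b j <;> cases hb' : b' j <;> simp_all [scSign]
  have h2 : scSign (b j) • C.S j * (scSign (b j) • C.S j) = 1 := by
    rw [Matrix.smul_mul, Matrix.mul_smul, C.S_invol, smul_smul]
    cases hb : b j <;> norm_num [scSign]
  simp only [fac, hs, neg_smul]
  generalize scSign (b j) • C.S j = a at h2 ⊢
  have key : (1 + a) * (1 + -a) = 1 - a * a := by noncomm_ring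
  rw [key, h2, sub_self]

/-- the commutative subalgebra generated by the stabilizer generators -/
noncomputable def Tsub : Subalgebra ℂ (Matrix (Fin (2 ^ n)) (Fin (2 ^ n)) ℂ) :=
  Algebra.adjoin ℂ (Set.range C.S)

noncomputable instance : CommRing (C.Tsub) :=
  Algebra.adjoinCommRingOfComm ℂ (by
    rintro _ ⟨i, rfl⟩ _ ⟨j, rfl⟩; exact C.S_comm i j)

lemma fac_mem (b : Fin (n - k) → Bool) (j : Fin (n - k)) : C.fac b j ∈ C.Tsub :=
  add_mem (one_mem _) (Subalgebra.smul_mem _ (Algebra.subset_adjoin (Set.mem_range_self j)) _)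

/-- the factor, as an element of the commutative subalgebra -/
noncomputable def facT (b : Fin (n - k) → Bool) (j : Fin (n - k)) : C.Tsub :=
  ⟨C.fac b j, C.fac_mem b j⟩

/-- the unnormalized projector, inside the commutative subalgebra -/
noncomputable def QT (b : Fin (n - k) → Bool) : C.Tsub := ∏ j, C.facT b j

lemma val_QT (b : Fin (n - k) → Bool) : (C.QT b : Matrix (Fin (2 ^ n)) (Fin (2 ^ n)) ℂ) = C.Qmat b := by
  rw [QT, ← Finset.noncommProd_eq_prod]
  rw [Qmat]
  exact (Finset.map_noncommProd _ _ _ (C.Tsub).val).trans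
    (Finset.noncommProd_congr rfl (fun j _ => rfl) _)

lemma qmat_mul (b b' : Fin (n - k) → Bool) :
    C.Qmat b * C.Qmat b' = if b = b' then ((2 : ℂ) ^ (n - k)) • C.Qmat b else 0 := by
  classical
  by_cases h : b = b'
  · subst h
    simp only [if_pos rfl]
    rw [← C.val_QT, ← Subalgebra.coe_mul]
    have : C.QT b * C.QT b = ((2 : ℂ) ^ (n - k)) • C.QT b := by
      erw [QT, ← Finset.prod_mul_distrib]
      have h1 : ∀ j ∈ Finset.univ,
          C.facT b j * C.facT b j = algebraMap ℂ C.Tsub 2 * C.facT b j := by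
        intro j _
        rw [← Algebra.smul_def]
        refine Subtype.ext ?_
        push_cast [facT]
        exact C.fac_mul_self b j
      erw [Finset.prod_congr rfl h1, Finset.prod_mul_distrib, Finset.prod_const,
        ← map_pow, Finset.card_univ, Fintype.card_fin, ← Algebra.smul_def]
    rw [this]
    push_cast
    rw [C.val_QT]
  · simp only [if_neg h]
    obtain ⟨j0, hj0⟩ : ∃ j, b j ≠ b' j := by
      by_contra hc
      push_neg at hc
      exact h (funext hc)
    rw [← C.val_QT, ← C.val_QT, ← Subalgebra.coe_mul]
    have : C.QT b * C.QT b' = 0 := by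
      erw [QT, QT, ← Finset.prod_mul_distrib]
      apply Finset.prod_eq_zero (Finset.mem_univ j0)
      refine Subtype.ext ?_
      push_cast [facT]
      exact C.fac_mul_opp b b' j0 hj0
    rw [this]
    simp

lemma qmat_sum :
    ∑ b : Fin (n - k) → Bool, C.Qmat b = ((2 : ℂ) ^ (n - k)) • 1 := by
  classical
  have key : ∑ b : Fin (n - k) → Bool, C.QT b = ((2 : ℂ) ^ (n - k)) • 1 := by
    have h1 : ∀ j : Fin (n - k), (∑ y : Bool, C.facT (fun _ => y) j) = (2 : ℂ) • 1 := by
      intro j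
      rw [Fintype.sum_bool]
      refine Subtype.ext ?_
      push_cast [facT, fac, scSign]
      norm_num
      module
    calc ∑ b : Fin (n - k) → Bool, C.QT b
        = ∑ b ∈ Fintype.piFinset (fun _ : Fin (n - k) => (Finset.univ : Finset Bool)),
            ∏ j, C.facT (fun _ => b j) j := by
          rw [Fintype.piFinset_univ]
          refine Finset.sum_congr rfl fun b _ => ?_
          rw [QT]
          refine Finset.prod_congr rfl fun j _ => ?_
          refine Subtype.ext ?_
          simp [facT, fac]
      _ = ∏ j : Fin (n - k), ∑ y : Bool, C.facT (fun _ => y) j := by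
          erw [Finset.prod_univ_sum]
          rfl
      _ = ((2 : ℂ) ^ (n - k)) • 1 := by
          rw [Finset.prod_congr rfl fun j _ => h1 j, Finset.prod_const]
          erw [smul_pow, one_pow, Finset.card_univ]
          simp
  have := congrArg (Subtype.val) key
  push_cast at this
  rw [show ∑ b : Fin (n - k) → Bool, (C.QT b : Matrix (Fin (2 ^ n)) (Fin (2 ^ n)) ℂ)
      = ∑ b : Fin (n - k) → Bool, C.Qmat b from Finset.sum_congr rfl fun b _ => C.val_QT b] at this
  exact this

/-- conjugation by `P m`, as a monoid hom -/
noncomputable def conjP (m : Fin (2 ^ (n - k))) :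
    Matrix (Fin (2 ^ n)) (Fin (2 ^ n)) ℂ →* Matrix (Fin (2 ^ n)) (Fin (2 ^ n)) ℂ where
  toFun x := C.P m * x * C.P m
  map_one' := by show C.P m * 1 * C.P m = 1; rw [mul_one, C.P_invol]
  map_mul' x y := by
    have h := C.P_invol m
    calc C.P m * (x * y) * C.P m
        = C.P m * x * (C.P m * C.P m) * y * C.P m := by rw [h]; noncomm_ring
      _ = C.P m * x * C.P m * (C.P m * y * C.P m) := by noncomm_ring

lemma conjP_S (m : Fin (2 ^ (n - k))) (j : Fin (n - k)) :
    C.conjP m (C.S j) = scSign (C.ν m j) • C.S j := by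
  show C.P m * C.S j * C.P m = _
  rw [C.P_S_comm m j]
  rw [Matrix.smul_mul, mul_assoc, C.P_invol, mul_one]
  rfl

lemma conjP_fac (m : Fin (2 ^ (n - k))) (b : Fin (n - k) → Bool) (j : Fin (n - k)) :
    C.conjP m (C.fac b j) = C.fac (fun i => xor (b i) (C.ν m i)) j := by
  have : C.conjP m (C.fac b j)
      = C.conjP m 1 + scSign (b j) • C.conjP m (C.S j) := by
    show C.P m * (1 + scSign (b j) • C.S j) * C.P m = _
    rw [mul_add, add_mul, Matrix.mul_smul, Matrix.smul_mul]
    rfl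
  rw [this, _root_.map_one, C.conjP_S, smul_smul, fac]
  congr 1
  cases hb : b j <;> cases hn : C.ν m j <;> norm_num [scSign]

lemma conjP_qmat (m : Fin (2 ^ (n - k))) (b : Fin (n - k) → Bool) :
    C.conjP m (C.Qmat b) = C.Qmat (fun i => xor (b i) (C.ν m i)) := by
  rw [Qmat, Qmat]
  exact (Finset.map_noncommProd _ _ _ (C.conjP m)).trans
    (Finset.noncommProd_congr rfl (fun j _ => C.conjP_fac m b j) _)

lemma P_mul_qmat (m : Fin (2 ^ (n - k))) (b : Fin (n - k) → Bool) :
    C.P m * C.Qmat b = C.Qmat (fun i => xor (b i) (C.ν m i)) * C.P m := by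
  rw [← C.conjP_qmat m b]
  show _ = C.P m * C.Qmat b * C.P m * C.P m
  rw [mul_assoc, C.P_invol, mul_one]

lemma qmat_mul_P (m : Fin (2 ^ (n - k))) (b : Fin (n - k) → Bool) :
    C.Qmat b * C.P m = C.P m * C.Qmat (fun i => xor (b i) (C.ν m i)) := by
  rw [C.P_mul_qmat m (fun i => xor (b i) (C.ν m i))]
  rw [show (fun i => xor (xor (b i) (C.ν m i)) (C.ν m i)) = b from
    funext fun i => by cases b i <;> cases C.ν m i <;> rfl]

/-- the normalized projector for a sign pattern -/
noncomputable def Pr (b : Fin (n - k) → Bool) : Matrix (Fin (2 ^ n)) (Fin (2 ^ n)) ℂ :=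
  ((2 : ℂ) ^ (n - k))⁻¹ • C.Qmat b

lemma two_pow_nk_ne : ((2 : ℂ) ^ (n - k)) ≠ 0 := pow_ne_zero _ two_ne_zero

lemma proj_eq (m : Fin (2 ^ (n - k))) : C.Proj m = C.Pr (C.ν m) := rfl

lemma pr_mul (b b' : Fin (n - k) → Bool) :
    C.Pr b * C.Pr b' = if b = b' then C.Pr b else 0 := by
  simp only [Pr]
  rw [Matrix.smul_mul, Matrix.mul_smul, C.qmat_mul]
  by_cases h : b = b'
  · subst h
    simp only [Pr, if_pos rfl, eq_self_iff_true, ite_true, if_true]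
    match_scalars
    field_simp
  · simp only [if_neg h, smul_zero]

lemma pr_sum : ∑ b : Fin (n - k) → Bool, C.Pr b = 1 := by
  simp only [Pr]
  rw [← Finset.smul_sum, C.qmat_sum, smul_smul]
  rw [inv_mul_cancel₀ (two_pow_nk_ne (n := n) (k := k)), one_smul]

lemma P_mul_pr (m : Fin (2 ^ (n - k))) (b : Fin (n - k) → Bool) :
    C.P m * C.Pr b = C.Pr (fun i => xor (b i) (C.ν m i)) * C.P m := by
  simp only [Pr]
  rw [Matrix.mul_smul, Matrix.smul_mul, C.P_mul_qmat]

lemma pr_mul_P (m : Fin (2 ^ (n - k))) (b : Fin (n - k) → Bool) :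
    C.Pr b * C.P m = C.P m * C.Pr (fun i => xor (b i) (C.ν m i)) := by
  simp only [Pr]
  rw [Matrix.mul_smul, Matrix.smul_mul, C.qmat_mul_P]

lemma nu_self_xor (m : Fin (2 ^ (n - k))) :
    (fun i => xor (C.ν m i) (C.ν m i)) = fun _ : Fin (n - k) => false := by
  funext i; simp

lemma nu_false_xor (m : Fin (2 ^ (n - k))) :
    (fun i => xor false (C.ν m i)) = C.ν m := by
  funext i; simp

lemma nu_eq_zero_iff (m : Fin (2 ^ (n - k))) :
    C.ν m = (fun _ => false) ↔ m = 0 := by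
  constructor
  · intro h
    apply C.ν_inj
    rw [h]
    funext j
    rw [C.ν_zero j]
  · rintro rfl
    funext j
    exact C.ν_zero j

lemma pr0_P_pr0 (m : Fin (2 ^ (n - k))) :
    C.Pr (fun _ => false) * C.P m * C.Pr (fun _ => false)
      = if m = 0 then C.Pr (fun _ => false) else 0 := by
  rw [mul_assoc, C.P_mul_pr, ← mul_assoc, C.pr_mul]
  by_cases h : m = 0
  · subst h
    rw [C.nu_false_xor, if_pos]
    · rw [C.P_zero, mul_one, if_pos rfl]
    · funext j; rw [C.ν_zero j]
  · rw [C.nu_false_xor, if_neg, if_neg h, zero_mul]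
    intro hc
    exact h ((C.nu_eq_zero_iff m).mp hc.symm)

lemma chan_eq (ρ : Matrix (Fin (2 ^ n)) (Fin (2 ^ n)) ℂ) :
    C.chan ρ = C.Pr (fun _ => false) * (∑ m, C.P m * ρ * C.P m) * C.Pr (fun _ => false) := by
  show (∑ m, C.P m * C.Proj m * ρ * (C.Proj m * C.P m)) = _
  rw [Finset.mul_sum, Finset.sum_mul]
  refine Finset.sum_congr rfl fun m _ => ?_
  rw [proj_eq, C.pr_mul_P, C.nu_self_xor]
  have h1 : C.P m * C.Pr (C.ν m) = C.Pr (fun _ => false) * C.P m := by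
    rw [C.P_mul_pr, C.nu_self_xor]
  rw [h1]
  noncomm_ring

lemma chan_idem : C.chan ∘ₗ C.chan = C.chan := by
  refine LinearMap.ext fun ρ => ?_
  simp only [LinearMap.comp_apply]
  rw [C.chan_eq ρ, C.chan_eq]
  set G := ∑ m, C.P m * ρ * C.P m with hG
  set Z := C.Pr (fun _ => false) with hZ
  have key : ∀ m, C.P m * (Z * G * Z) * C.P m
      = (C.P m * Z) * G * (Z * C.P m) := by intro m; noncomm_ring
  rw [show (∑ m : Fin (2 ^ (n - k)), C.P m * (Z * G * Z) * C.P m)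
      = ∑ m : Fin (2 ^ (n - k)), (C.P m * Z) * G * (Z * C.P m) from
    Finset.sum_congr rfl fun m _ => key m]
  rw [Finset.mul_sum, Finset.sum_mul]
  have key2 : ∀ m, Z * (C.P m * Z * G * (Z * C.P m)) * Z
      = (Z * C.P m * Z) * G * (Z * C.P m * Z) := by intro m; noncomm_ring
  rw [show (∑ m : Fin (2 ^ (n - k)), Z * (C.P m * Z * G * (Z * C.P m)) * Z)
      = ∑ m : Fin (2 ^ (n - k)), (Z * C.P m * Z) * G * (Z * C.P m * Z) from
    Finset.sum_congr rfl fun m _ => key2 m]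
  have key3 : ∀ m, (Z * C.P m * Z) * G * (Z * C.P m * Z)
      = if m = 0 then Z * G * Z else 0 := by
    intro m
    rw [hZ, C.pr0_P_pr0]
    by_cases h : m = 0
    · rw [if_pos h, if_pos h]
    · rw [if_neg h, if_neg h, zero_mul, mul_zero]
  rw [show (∑ m : Fin (2 ^ (n - k)), (Z * C.P m * Z) * G * (Z * C.P m * Z))
      = ∑ m : Fin (2 ^ (n - k)), if m = 0 then Z * G * Z else 0 from
    Finset.sum_congr rfl fun m _ => key3 m]
  rw [Finset.sum_ite_eq' Finset.univ (0 : Fin (2 ^ (n - k)))]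
  rw [if_pos (Finset.mem_univ _)]

lemma nu_surj : Function.Surjective C.ν := by
  have : Function.Bijective C.ν := by
    rw [Fintype.bijective_iff_injective_and_card]
    exact ⟨C.ν_inj, by simp [Fintype.card_fun]⟩
  exact this.2

lemma trace_qmat (b : Fin (n - k) → Bool) :
    (C.Qmat b).trace = (C.Qmat (fun _ => false)).trace := by
  obtain ⟨m, rfl⟩ := C.nu_surj b
  have : C.Qmat (C.ν m) = C.P m * C.Qmat (fun _ => false) * C.P m := by
    have := C.conjP_qmat m (fun _ => false)
    rw [C.nu_false_xor] at this
    rw [← this]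
    rfl
  rw [this, Matrix.trace_mul_comm, ← mul_assoc, C.P_invol, one_mul]

lemma trace_qmat_false (hk : k ≤ n) :
    (C.Qmat (fun _ => false)).trace = (2 : ℂ) ^ n := by
  have h1 : ∑ b : Fin (n - k) → Bool, (C.Qmat b).trace = (2 : ℂ) ^ (n - k) * (2 : ℂ) ^ n := by
    rw [← Matrix.trace_sum, C.qmat_sum, Matrix.trace_smul]
    simp [Matrix.trace_one, smul_eq_mul]
  rw [Finset.sum_congr rfl (fun b _ => C.trace_qmat b), Finset.sum_const,
    Finset.card_univ, Fintype.card_fun] at h1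
  simp only [Fintype.card_bool, Fintype.card_fin, nsmul_eq_mul] at h1
  have h2 : ((2 ^ (n - k) : ℕ) : ℂ) = (2 : ℂ) ^ (n - k) := by push_cast; ring
  rw [h2] at h1
  exact mul_left_cancel₀ (two_pow_nk_ne (n := n) (k := k)) h1

lemma trace_pr_false (hk : k ≤ n) :
    (C.Pr (fun _ => false)).trace = (2 : ℂ) ^ k := by
  simp only [Pr]
  rw [Matrix.trace_smul, C.trace_qmat_false hk, smul_eq_mul]
  rw [show n = (n - k) + k by omega, pow_add]
  field_simp
  rw [Nat.add_sub_cancel]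

end StabCode
end
end Aux


open Polynomial in
/-- The eigenspectrum of the perfect error-correcting channel `Λ` of an `[n,k]`
stabilizer code, viewed as a linear endomorphism of the `4^n`-dimensional matrix
space, consists of `0` and `1` with (algebraic) multiplicities `4^n - 4^k` and `4^k`
respectively; equivalently, its characteristic polynomial is
`X^(4^n - 4^k) * (X - 1)^(4^k)`. -/
theorem stabilizer_channel_eigenvalues {n k : ℕ} (hk : k ≤ n) (C : StabCode n k) :
    LinearMap.charpoly C.chan = X ^ (4 ^ n - 4 ^ k) * (X - 1) ^ (4 ^ k) := by
  classical
  obtain ⟨hcp, htr⟩ := charpoly_idem C.chan C.chan_idem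
  have h0 : C.Pr (fun _ => false) * C.Pr (fun _ => false) = C.Pr (fun _ => false) := by
    rw [C.pr_mul]; simp
  have hPr0P : ∀ m, (C.Pr (fun _ => false) * C.P m).trace
      = if m = 0 then (2 : ℂ) ^ k else 0 := by
    intro m
    by_cases h : m = 0
    · subst h
      rw [C.P_zero, mul_one, C.trace_pr_false hk, if_pos rfl]
    · rw [if_neg h]
      have h1 : C.Pr (fun _ => false) * C.P m = C.P m * C.Pr (C.ν m) := by
        rw [C.pr_mul_P, C.nu_false_xor]
      rw [← h0, mul_assoc, h1, ← mul_assoc, Matrix.trace_mul_comm, ← mul_assoc, C.pr_mul]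
      rw [if_neg, zero_mul, Matrix.trace_zero]
      intro hc
      exact h ((C.nu_eq_zero_iff m).mp hc)
  have hA : ∀ m, (C.P m * C.Proj m).trace = if m = 0 then (2 : ℂ) ^ k else 0 := by
    intro m
    rw [C.proj_eq, C.P_mul_pr, C.nu_self_xor, ← hPr0P m]
  have hB : ∀ m, (C.Proj m * C.P m).trace = if m = 0 then (2 : ℂ) ^ k else 0 := by
    intro m
    rw [C.proj_eq, C.pr_mul_P, C.nu_self_xor, Matrix.trace_mul_comm, ← hPr0P m]
  have hchan : C.chan = ∑ m, (LinearMap.mulRight ℂ (C.Proj m * C.P m)).comp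
      (LinearMap.mulLeft ℂ (C.P m * C.Proj m)) := by
    refine LinearMap.ext fun ρ => ?_
    show (∑ m, C.P m * C.Proj m * ρ * (C.Proj m * C.P m)) = _
    rw [LinearMap.sum_apply]
    refine Finset.sum_congr rfl fun m _ => ?_
    simp only [LinearMap.comp_apply, LinearMap.mulLeft_apply, LinearMap.mulRight_apply]
  have htrace : LinearMap.trace ℂ _ C.chan = (4 : ℂ) ^ k := by
    rw [hchan, map_sum]
    rw [Finset.sum_congr rfl fun m _ => trace_sandwich (C.P m * C.Proj m) (C.Proj m * C.P m)]
    rw [Finset.sum_congr rfl fun m (_ : m ∈ Finset.univ) => by rw [hA m, hB m]]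
    rw [show (∑ m : Fin (2 ^ (n - k)), (if m = 0 then (2 : ℂ) ^ k else 0)
          * (if m = 0 then (2 : ℂ) ^ k else 0))
        = ∑ m : Fin (2 ^ (n - k)), (if m = 0 then (2 : ℂ) ^ k * (2 : ℂ) ^ k else 0) from
      Finset.sum_congr rfl fun m _ => by split <;> simp]
    rw [Finset.sum_ite_eq' Finset.univ (0 : Fin (2 ^ (n - k))), if_pos (Finset.mem_univ _)]
    rw [← mul_pow]; norm_num
  have hr : Module.finrank ℂ (LinearMap.range C.chan) = 4 ^ k := by
    have h1 : ((Module.finrank ℂ (LinearMap.range C.chan) : ℂ)) = ((4 ^ k : ℕ) : ℂ) := by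
      rw [← htr, htrace]; push_cast; ring
    exact_mod_cast h1
  have hV : Module.finrank ℂ (Matrix (Fin (2 ^ n)) (Fin (2 ^ n)) ℂ) = 4 ^ n := by
    rw [Module.finrank_matrix]
    simp only [Fintype.card_fin, Module.finrank_self, mul_one]
    rw [← mul_pow]
    norm_num
  rw [hcp, hr, hV]
end

section
/- With Δ̄(ρ) = 2^{−(n−k)} Σ_{m₁,m₂} P_{m₁}Π₁P_{m₂} ρ P_{m₂}Π₁P_{m₁} as above, Δ̄ is idempotent: Δ̄∘Δ̄ = Δ̄. Consequently the eigenvalues of Δ̄ lie in {0,1}, and the eigenvalues of Δ = Λ†Λ lie in {0, 2^{n−k}}. -/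
set_option maxHeartbeats 1000000


open Matrix Finset

section Aux
variable {ι R : Type*} [Ring R]

lemma noncommProd_pull (s : Finset ι) (f g : ι → R) (P : R)
    (hf : ∀ i j, Commute (f i) (f j)) (hg : ∀ i j, Commute (g i) (g j))
    (h : ∀ i, f i * P = P * g i) :
    s.noncommProd f (fun i _ j _ _ => hf i j) * P
      = P * s.noncommProd g (fun i _ j _ _ => hg i j) := by
  classical
  suffices H : ∀ h1 h2, s.noncommProd f h1 * P = P * s.noncommProd g h2 from H _ _
  induction s using Finset.induction_on with
  | empty => intro h1 h2; simp
  | @insert a s ha ih =>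
    intro h1 h2
    rw [Finset.noncommProd_insert_of_notMem _ _ _ _ ha,
        Finset.noncommProd_insert_of_notMem _ _ _ _ ha,
        mul_assoc, ih, ← mul_assoc, h, mul_assoc]

lemma noncommProd_eq_zero' (s : Finset ι) (f : ι → R) (comm) {i : ι} (hi : i ∈ s)
    (h : f i = 0) : s.noncommProd f comm = 0 := by
  classical
  rw [← Finset.mul_noncommProd_erase s hi f comm, h, zero_mul]


lemma noncommProd_mul_noncommProd (s : Finset ι) (f g : ι → R)
    (hf : ∀ i j, Commute (f i) (f j)) (hg : ∀ i j, Commute (g i) (g j))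
    (hgf : ∀ i j, Commute (g i) (f j)) :
    s.noncommProd f (fun i _ j _ _ => hf i j) * s.noncommProd g (fun i _ j _ _ => hg i j)
      = s.noncommProd (fun i => f i * g i)
          (fun i _ j _ _ => ((hf i j).mul_right (hgf j i).symm).mul_left
            ((hgf i j).mul_right (hg i j)) ) := by
  classical
  suffices H : ∀ h1 h2 h3, s.noncommProd f h1 * s.noncommProd g h2
      = s.noncommProd (fun i => f i * g i) h3 from H _ _ _
  induction s using Finset.induction_on with
  | empty => intro h1 h2 h3; simp
  | @insert a s ha ih =>
    intro h1 h2 h3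
    rw [Finset.noncommProd_insert_of_notMem _ _ _ _ ha,
        Finset.noncommProd_insert_of_notMem _ _ _ _ ha,
        Finset.noncommProd_insert_of_notMem _ _ _ _ ha]
    have hcomm : Commute (g a) (s.noncommProd f (fun i _ j _ _ => hf i j)) :=
      Finset.noncommProd_commute _ _ _ _ (fun x _ => hgf a x)
    calc f a * s.noncommProd f _ * (g a * s.noncommProd g _)
        = f a * (s.noncommProd f (fun i _ j _ _ => hf i j) * g a) * s.noncommProd g (fun i _ j _ _ => hg i j) := by
          simp [mul_assoc]
      _ = f a * g a * (s.noncommProd f (fun i _ j _ _ => hf i j) * s.noncommProd g (fun i _ j _ _ => hg i j)) := by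
          rw [← hcomm.eq]; simp [mul_assoc]
      _ = _ := congrArg _ (ih _ _ _)

end Aux

namespace StabCode

/-- The map `Δ(ρ) = Σ_{m₁,m₂} P_{m₁} Π₁ P_{m₂} ρ P_{m₂} Π₁ P_{m₁}`, i.e. `Λ† ∘ Λ` for
the perfect error-correcting channel `Λ` (adjoint in the Hilbert–Schmidt inner
product). -/
noncomputable def Dmap {n k : ℕ} (C : StabCode n k) :
    Matrix (Fin (2 ^ n)) (Fin (2 ^ n)) ℂ →ₗ[ℂ] Matrix (Fin (2 ^ n)) (Fin (2 ^ n)) ℂ where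
  toFun ρ := ∑ m₁, ∑ m₂, (C.P m₁ * C.Proj 0 * C.P m₂) * ρ * (C.P m₂ * C.Proj 0 * C.P m₁)
  map_add' x y := by simp [mul_add, add_mul, Finset.sum_add_distrib]
  map_smul' c x := by simp [Finset.smul_sum, Matrix.mul_smul, Matrix.smul_mul]

/-- The rescaled map `Δ̄ = 2^{-(n-k)} Δ`. -/
noncomputable def Dbar {n k : ℕ} (C : StabCode n k) :
    Matrix (Fin (2 ^ n)) (Fin (2 ^ n)) ℂ →ₗ[ℂ] Matrix (Fin (2 ^ n)) (Fin (2 ^ n)) ℂ :=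
  ((2 : ℂ) ^ (n - k))⁻¹ • C.Dmap

end StabCode

namespace StabCode

variable {n k : ℕ} (C : StabCode n k)

lemma sign_sq (m : Fin (2 ^ (n - k))) (j : Fin (n - k)) : C.sign m j * C.sign m j = 1 := by
  unfold sign; split <;> ring

lemma factor_comm (t t' : Fin (n - k) → ℂ) (i j : Fin (n - k)) :
    Commute ((1 : Matrix (Fin (2 ^ n)) (Fin (2 ^ n)) ℂ) + t i • C.S i)
      (1 + t' j • C.S j) := by
  have hc : Commute (C.S i) (C.S j) := C.S_comm i j
  exact Commute.add_left (Commute.one_left _)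
    (Commute.add_right (Commute.one_right _) ((hc.smul_left _).smul_right _))

noncomputable def pq (t : Fin (n - k) → ℂ) : Matrix (Fin (2 ^ n)) (Fin (2 ^ n)) ℂ :=
  Finset.univ.noncommProd
    (fun j => (1 : Matrix (Fin (2 ^ n)) (Fin (2 ^ n)) ℂ) + t j • C.S j)
    (fun i _ j _ _ => C.factor_comm t t i j)

lemma Proj_zero_eq : C.Proj 0 = ((2 : ℂ) ^ (n - k))⁻¹ • C.pq (fun _ => 1) := by
  unfold Proj pq
  congr 1
  refine Finset.noncommProd_congr rfl (fun j _ => ?_) _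
  simp [sign, C.ν_zero]

lemma Proj_eq (m) : C.Proj m = ((2 : ℂ) ^ (n - k))⁻¹ • C.pq (C.sign m) := rfl

lemma pq_mul_P (t : Fin (n - k) → ℂ) (m : Fin (2 ^ (n - k))) :
    C.pq t * C.P m = C.P m * C.pq (fun j => t j * C.sign m j) := by
  refine noncommProd_pull _ _ _ _ (C.factor_comm t t) (C.factor_comm _ _) (fun j => ?_)
  have hSP : C.S j * C.P m = C.sign m j • (C.P m * C.S j) := by
    have h := C.P_S_comm m j
    have h' : C.sign m j • (C.P m * C.S j) = (C.sign m j * C.sign m j) • (C.S j * C.P m) := by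
      rw [h, smul_smul]; rfl
    rw [h', C.sign_sq, one_smul]
  rw [add_mul, one_mul, mul_add, mul_one, smul_mul_assoc, hSP, mul_smul_comm,
    smul_smul]




lemma pq_one_sq (C : StabCode n k) :
    C.pq (fun _ => 1) * C.pq (fun _ => 1) = ((2 : ℂ) ^ (n - k)) • C.pq (fun _ => 1) := by
  have h1 := noncommProd_mul_noncommProd (Finset.univ (α := Fin (n - k)))
    (fun j => (1 : Matrix (Fin (2 ^ n)) (Fin (2 ^ n)) ℂ) + (1:ℂ) • C.S j)
    (fun j => (1 : Matrix (Fin (2 ^ n)) (Fin (2 ^ n)) ℂ) + (1:ℂ) • C.S j)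
    (C.factor_comm _ _) (C.factor_comm _ _) (C.factor_comm _ _)
  have h2 := noncommProd_mul_noncommProd (Finset.univ (α := Fin (n - k)))
    (fun _ => (2:ℂ) • (1 : Matrix (Fin (2 ^ n)) (Fin (2 ^ n)) ℂ))
    (fun j => (1 : Matrix (Fin (2 ^ n)) (Fin (2 ^ n)) ℂ) + (1:ℂ) • C.S j)
    (fun i j => (Commute.refl _).smul_left _ |>.smul_right _)
    (C.factor_comm _ _)
    (fun i j => (Commute.one_right _).smul_right _)
  have hfac : ∀ j : Fin (n - k),
      ((1 : Matrix (Fin (2 ^ n)) (Fin (2 ^ n)) ℂ) + (1:ℂ) • C.S j) * (1 + (1:ℂ) • C.S j)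
      = ((2:ℂ) • (1 : Matrix (Fin (2 ^ n)) (Fin (2 ^ n)) ℂ)) * (1 + (1:ℂ) • C.S j) := by
    intro j
    have h := C.S_invol j
    simp only [one_smul, smul_mul_assoc, one_mul, add_mul, mul_add, mul_one, h, two_smul]
    abel
  have hcc : ∀ i j : Fin (n - k),
      Commute (((2:ℂ) • (1 : Matrix (Fin (2 ^ n)) (Fin (2 ^ n)) ℂ)) * (1 + (1:ℂ) • C.S i))
              (((2:ℂ) • (1 : Matrix (Fin (2 ^ n)) (Fin (2 ^ n)) ℂ)) * (1 + (1:ℂ) • C.S j)) := by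
    intro i j
    have h := C.factor_comm (fun _ => (1:ℂ)) (fun _ => (1:ℂ)) i j
    have h' := (h.smul_left (2:ℂ)).smul_right (2:ℂ)
    simpa only [smul_mul_assoc, one_mul] using h'
  have hff : ∀ i j : Fin (n - k),
      Commute (((1 : Matrix (Fin (2 ^ n)) (Fin (2 ^ n)) ℂ) + (1:ℂ) • C.S i) * (1 + (1:ℂ) • C.S i))
              (((1 : Matrix (Fin (2 ^ n)) (Fin (2 ^ n)) ℂ) + (1:ℂ) • C.S j) * (1 + (1:ℂ) • C.S j)) :=
    fun i j => ((C.factor_comm (fun _ => 1) (fun _ => 1) i j).mul_right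
        (C.factor_comm (fun _ => 1) (fun _ => 1) i j)).mul_left
      ((C.factor_comm (fun _ => 1) (fun _ => 1) i j).mul_right
        (C.factor_comm (fun _ => 1) (fun _ => 1) i j))
  have h4 : Finset.univ.noncommProd
        (fun j => ((1 : Matrix (Fin (2 ^ n)) (Fin (2 ^ n)) ℂ) + (1:ℂ) • C.S j) * (1 + (1:ℂ) • C.S j))
        (fun i _ j _ _ => hff i j)
      = Finset.univ.noncommProd
        (fun j => ((2:ℂ) • (1 : Matrix (Fin (2 ^ n)) (Fin (2 ^ n)) ℂ)) * (1 + (1:ℂ) • C.S j)) _ :=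
    Finset.noncommProd_congr rfl (fun j _ => hfac j) (fun i _ j _ _ => hff i j)
  have h3 : (Finset.univ (α := Fin (n - k))).noncommProd
        (fun _ => (2:ℂ) • (1 : Matrix (Fin (2 ^ n)) (Fin (2 ^ n)) ℂ))
        (fun i _ j _ _ => (Commute.refl _).smul_left _ |>.smul_right _)
      = ((2:ℂ) ^ (n - k)) • 1 := by
    refine (Finset.noncommProd_eq_pow_card _ _ _ _ (fun _ _ => rfl)).trans ?_
    rw [smul_pow, one_pow,
      Finset.card_univ, Fintype.card_fin]
  unfold pq
  rw [h1, h4, ← h2, h3, smul_mul_assoc, one_mul]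

lemma pq_mul_pq_one_eq_zero (C : StabCode n k) (t : Fin (n - k) → ℂ) {j₀ : Fin (n - k)}
    (ht : t j₀ = -1) : C.pq t * C.pq (fun _ => 1) = 0 := by
  have h1 := noncommProd_mul_noncommProd (Finset.univ (α := Fin (n - k)))
    (fun j => (1 : Matrix (Fin (2 ^ n)) (Fin (2 ^ n)) ℂ) + t j • C.S j)
    (fun j => (1 : Matrix (Fin (2 ^ n)) (Fin (2 ^ n)) ℂ) + (1:ℂ) • C.S j)
    (C.factor_comm _ _) (C.factor_comm _ _) (C.factor_comm _ _)
  unfold pq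
  rw [h1]
  refine noncommProd_eq_zero' _ _ _ (Finset.mem_univ j₀) ?_
  have h := C.S_invol j₀
  show ((1 : Matrix (Fin (2 ^ n)) (Fin (2 ^ n)) ℂ) + t j₀ • C.S j₀) * (1 + (1:ℂ) • C.S j₀) = 0
  rw [ht]
  simp only [neg_smul, one_smul, add_mul, mul_add, one_mul, mul_one, neg_mul, h]
  abel

lemma key (C : StabCode n k) (a b : Fin (2 ^ (n - k))) :
    C.Proj 0 * C.P a * C.P b * C.Proj 0 = if a = b then C.Proj 0 else 0 := by
  have h2 : ((2:ℂ) ^ (n - k)) ≠ 0 := pow_ne_zero _ two_ne_zero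
  have hp1 : C.pq (fun _ => 1) * C.P a = C.P a * C.pq (C.sign a) := by
    have h := C.pq_mul_P (fun _ => 1) a
    simpa using h
  have hp2 : C.pq (C.sign a) * C.P b
      = C.P b * C.pq (fun j => C.sign a j * C.sign b j) := C.pq_mul_P _ b
  rw [C.Proj_zero_eq, smul_mul_assoc, smul_mul_assoc, smul_mul_assoc, mul_smul_comm,
    smul_smul, hp1, mul_assoc (C.P a), hp2, ← mul_assoc (C.P a), mul_assoc (C.P a * C.P b)]
  by_cases hab : a = b
  · subst hab
    rw [show (fun j => C.sign a j * C.sign a j) = (fun _ => (1:ℂ)) from funext (C.sign_sq a),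
      C.pq_one_sq, C.P_invol, one_mul, if_pos rfl, smul_smul]
    congr 1
    field_simp
  · have hne : C.ν a ≠ C.ν b := fun h => hab (C.ν_inj h)
    rw [Function.ne_iff] at hne
    obtain ⟨j₀, hj⟩ := hne
    have ht : C.sign a j₀ * C.sign b j₀ = -1 := by
      unfold sign
      cases h1 : C.ν a j₀ <;> cases h2 : C.ν b j₀ <;> simp_all
    rw [C.pq_mul_pq_one_eq_zero _ ht, mul_zero, smul_zero, if_neg hab]

lemma A_mul_A (C : StabCode n k) (a b c d : Fin (2 ^ (n - k))) :
    (C.P a * C.Proj 0 * C.P b) * (C.P c * C.Proj 0 * C.P d)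
      = if b = c then C.P a * C.Proj 0 * C.P d else 0 := by
  have hassoc : (C.P a * C.Proj 0 * C.P b) * (C.P c * C.Proj 0 * C.P d)
      = C.P a * ((C.Proj 0 * C.P b * C.P c * C.Proj 0) * C.P d) := by
    simp only [mul_assoc]
  rw [hassoc, C.key b c]
  split_ifs with h
  · simp only [mul_assoc]
  · simp

lemma Dmap_apply (C : StabCode n k) (ρ : Matrix (Fin (2 ^ n)) (Fin (2 ^ n)) ℂ) :
    C.Dmap ρ = ∑ m₁, ∑ m₂, (C.P m₁ * C.Proj 0 * C.P m₂) * ρ * (C.P m₂ * C.Proj 0 * C.P m₁) :=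
  rfl

lemma Dmap_comp (C : StabCode n k) :
    C.Dmap ∘ₗ C.Dmap = ((2:ℂ) ^ (n - k)) • C.Dmap := by
  apply LinearMap.ext; intro ρ
  rw [LinearMap.comp_apply, LinearMap.smul_apply, Dmap_apply, Dmap_apply]
  have hterm : ∀ m1 m2 m3 m4 : Fin (2 ^ (n - k)),
      (C.P m1 * C.Proj 0 * C.P m2) *
        ((C.P m3 * C.Proj 0 * C.P m4) * ρ * (C.P m4 * C.Proj 0 * C.P m3)) *
        (C.P m2 * C.Proj 0 * C.P m1)
      = if m2 = m3 then
          (C.P m1 * C.Proj 0 * C.P m4) * ρ * (C.P m4 * C.Proj 0 * C.P m1) else 0 := by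
    intro m1 m2 m3 m4
    have hassoc : (C.P m1 * C.Proj 0 * C.P m2) *
        ((C.P m3 * C.Proj 0 * C.P m4) * ρ * (C.P m4 * C.Proj 0 * C.P m3)) *
        (C.P m2 * C.Proj 0 * C.P m1)
        = ((C.P m1 * C.Proj 0 * C.P m2) * (C.P m3 * C.Proj 0 * C.P m4)) * ρ *
          ((C.P m4 * C.Proj 0 * C.P m3) * (C.P m2 * C.Proj 0 * C.P m1)) := by
      simp only [mul_assoc]
    rw [hassoc, C.A_mul_A m1 m2 m3 m4, C.A_mul_A m4 m3 m2 m1]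
    by_cases h : m2 = m3
    · subst h; simp
    · simp [h, fun hh : m3 = m2 => h hh.symm]
  calc (∑ m1, ∑ m2, (C.P m1 * C.Proj 0 * C.P m2) *
          (∑ m3, ∑ m4, (C.P m3 * C.Proj 0 * C.P m4) * ρ * (C.P m4 * C.Proj 0 * C.P m3)) *
          (C.P m2 * C.Proj 0 * C.P m1))
      = ∑ m1, ∑ m2, ∑ m3, ∑ m4,
          (C.P m1 * C.Proj 0 * C.P m2) *
            ((C.P m3 * C.Proj 0 * C.P m4) * ρ * (C.P m4 * C.Proj 0 * C.P m3)) *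
            (C.P m2 * C.Proj 0 * C.P m1) := by
        simp only [Finset.mul_sum, Finset.sum_mul]
    _ = ∑ m1 : Fin (2 ^ (n - k)), ∑ _m2 : Fin (2 ^ (n - k)), ∑ m4 : Fin (2 ^ (n - k)),
          (C.P m1 * C.Proj 0 * C.P m4) * ρ * (C.P m4 * C.Proj 0 * C.P m1) := by
        simp only [hterm, Finset.sum_ite_irrel, Finset.sum_const_zero, Finset.sum_ite_eq,
          Finset.mem_univ, if_true]
    _ = ((2:ℂ) ^ (n - k)) • ∑ m₁, ∑ m₂,
          (C.P m₁ * C.Proj 0 * C.P m₂) * ρ * (C.P m₂ * C.Proj 0 * C.P m₁) := by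
        rw [Finset.smul_sum]
        refine Finset.sum_congr rfl (fun m1 _ => ?_)
        rw [Finset.sum_const, Finset.card_univ, Fintype.card_fin,
          ← Nat.cast_smul_eq_nsmul ℂ]
        norm_num

end StabCode



/-- `Δ̄` is idempotent, `Δ̄ ∘ Δ̄ = Δ̄`; consequently its eigenvalues lie in `{0, 1}`,
and the eigenvalues of `Δ = Λ† Λ` lie in `{0, 2^(n-k)}`. -/
theorem stabilizer_Dbar_idempotent {n k : ℕ} (hk : k ≤ n) (C : StabCode n k) :
    C.Dbar ∘ₗ C.Dbar = C.Dbar ∧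
      (∀ μ ∈ spectrum ℂ (C.Dbar : Module.End ℂ (Matrix (Fin (2 ^ n)) (Fin (2 ^ n)) ℂ)),
        μ = 0 ∨ μ = 1) ∧
      (∀ μ ∈ spectrum ℂ (C.Dmap : Module.End ℂ (Matrix (Fin (2 ^ n)) (Fin (2 ^ n)) ℂ)),
        μ = 0 ∨ μ = (2 : ℂ) ^ (n - k)) := by
  have hc : ((2:ℂ) ^ (n - k)) ≠ 0 := pow_ne_zero _ two_ne_zero
  have hidem : C.Dbar ∘ₗ C.Dbar = C.Dbar := by
    unfold StabCode.Dbar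
    rw [LinearMap.smul_comp, LinearMap.comp_smul, C.Dmap_comp, smul_smul, smul_smul]
    congr 1
    field_simp
  have hDbarSpec : ∀ μ ∈ spectrum ℂ
      (C.Dbar : Module.End ℂ (Matrix (Fin (2 ^ n)) (Fin (2 ^ n)) ℂ)), μ = 0 ∨ μ = 1 := by
    intro μ hμ
    have he := Module.End.hasEigenvalue_iff_mem_spectrum.mpr hμ
    obtain ⟨x, hx⟩ := he.exists_hasEigenvector
    have h1 : C.Dbar x = μ • x := hx.apply_eq_smul
    have h2' : C.Dbar (C.Dbar x) = C.Dbar x := by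
      rw [← LinearMap.comp_apply, hidem]
    rw [h1, _root_.map_smul, h1, smul_smul] at h2'
    have h3 : (μ * μ - μ) • x = 0 := by rw [sub_smul, h2', sub_self]
    rcases smul_eq_zero.mp h3 with h | h
    · have h4 : μ * (μ - 1) = 0 := by linear_combination h
      rcases mul_eq_zero.mp h4 with h' | h'
      · exact Or.inl h'
      · exact Or.inr (by linear_combination h')
    · exact absurd h hx.right
  refine ⟨hidem, hDbarSpec, ?_⟩
  intro μ hμ
  have he := Module.End.hasEigenvalue_iff_mem_spectrum.mpr hμ
  obtain ⟨x, hx⟩ := he.exists_hasEigenvector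
  have h1 : C.Dmap x = μ • x := hx.apply_eq_smul
  have hDb : C.Dbar x = (((2:ℂ) ^ (n - k))⁻¹ * μ) • x := by
    show (((2 : ℂ) ^ (n - k))⁻¹ • C.Dmap) x = _
    rw [LinearMap.smul_apply, h1, smul_smul]
  have hev : Module.End.HasEigenvalue
      (C.Dbar : Module.End ℂ (Matrix (Fin (2 ^ n)) (Fin (2 ^ n)) ℂ))
      (((2:ℂ) ^ (n - k))⁻¹ * μ) :=
    Module.End.hasEigenvalue_of_hasEigenvector
      ⟨Module.End.mem_eigenspace_iff.mpr hDb, hx.right⟩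
  rcases hDbarSpec _ hev.mem_spectrum with h | h
  · left
    rcases mul_eq_zero.mp h with h' | h'
    · exact absurd h' (inv_ne_zero hc)
    · exact h'
  · right
    field_simp at h
    linear_combination h
end

section
/- Let Λ be the perfect error-correcting channel of the three-qubit bit-flip code with stabilizer generators S₁ = I⊗Z⊗Z and S₂ = Z⊗Z⊗I and recovery Paulis {I, X⊗I⊗I, I⊗X⊗I, I⊗I⊗X}. Then the superoperator of Λ has singular values 2 with multiplicity 4 and 0 with multiplicity 60. -/
open Matrix Kronecker





/-- The multiset of singular values of a complex matrix `A`, counted with multiplicity: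
the nonnegative square roots of the eigenvalues of `Aᴴ * A`. -/
noncomputable def singularValues {n : Type*} [Fintype n] [DecidableEq n]
    (A : Matrix n n ℂ) : Multiset ℝ :=
  ((Aᴴ * A).charpoly.roots).map fun z => Real.sqrt z.re

/-- Pauli `X`. -/
def pX : Matrix (Fin 2) (Fin 2) ℂ := !![0, 1; 1, 0]

/-- Pauli `Z`. -/
def pZ : Matrix (Fin 2) (Fin 2) ℂ := !![1, 0; 0, -1]

/-- First stabilizer generator `S₁ = I ⊗ Z ⊗ Z` of the three-qubit bit-flip code. -/
noncomputable def S₁ : Matrix (Fin 2 × Fin 2 × Fin 2) (Fin 2 × Fin 2 × Fin 2) ℂ :=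
  (1 : Matrix (Fin 2) (Fin 2) ℂ) ⊗ₖ (pZ ⊗ₖ pZ)

/-- Second stabilizer generator `S₂ = Z ⊗ Z ⊗ I`. -/
noncomputable def S₂ : Matrix (Fin 2 × Fin 2 × Fin 2) (Fin 2 × Fin 2 × Fin 2) ℂ :=
  pZ ⊗ₖ (pZ ⊗ₖ (1 : Matrix (Fin 2) (Fin 2) ℂ))

/-- The recovery Paulis `{I, X⊗I⊗I, I⊗X⊗I, I⊗I⊗X}`. -/
noncomputable def recP : Fin 4 → Matrix (Fin 2 × Fin 2 × Fin 2) (Fin 2 × Fin 2 × Fin 2) ℂ :=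
  ![1,
    pX ⊗ₖ ((1 : Matrix (Fin 2) (Fin 2) ℂ) ⊗ₖ (1 : Matrix (Fin 2) (Fin 2) ℂ)),
    (1 : Matrix (Fin 2) (Fin 2) ℂ) ⊗ₖ (pX ⊗ₖ (1 : Matrix (Fin 2) (Fin 2) ℂ)),
    (1 : Matrix (Fin 2) (Fin 2) ℂ) ⊗ₖ ((1 : Matrix (Fin 2) (Fin 2) ℂ) ⊗ₖ pX)]

/-- The signs `(-1)^{ν_m(j)}` of the syndromes of the recovery Paulis with respect to
`S₁, S₂`. -/
def sgn : Fin 4 → Fin 2 → ℂ :=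
  ![![1, 1], ![1, -1], ![-1, -1], ![-1, 1]]

/-- The syndrome-subspace projectors `Π_m = (I + (−1)^{ν_m(1)}S₁)(I + (−1)^{ν_m(2)}S₂)/4`. -/
noncomputable def Proj3 (m : Fin 4) :
    Matrix (Fin 2 × Fin 2 × Fin 2) (Fin 2 × Fin 2 × Fin 2) ℂ :=
  (4 : ℂ)⁻¹ • ((1 + sgn m 0 • S₁) * (1 + sgn m 1 • S₂))

/-- Kraus operators `A_m = P_m Π_m` of the bit-flip error-correcting channel
`Λ(ρ) = Σ_m P_m Π_m ρ Π_m P_m`. -/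
noncomputable def kraus3 (m : Fin 4) :
    Matrix (Fin 2 × Fin 2 × Fin 2) (Fin 2 × Fin 2 × Fin 2) ℂ :=
  recP m * Proj3 m


set_option maxRecDepth 40000
set_option maxHeartbeats 2000000
namespace BitAux
def pXz : Matrix (Fin 2) (Fin 2) ℤ := !![0, 1; 1, 0]
def pZz : Matrix (Fin 2) (Fin 2) ℤ := !![1, 0; 0, -1]
abbrev Q8 := Fin 2 × Fin 2 × Fin 2
def S₁z : Matrix Q8 Q8 ℤ := (1 : Matrix (Fin 2) (Fin 2) ℤ) ⊗ₖ (pZz ⊗ₖ pZz)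
def S₂z : Matrix Q8 Q8 ℤ := pZz ⊗ₖ (pZz ⊗ₖ (1 : Matrix (Fin 2) (Fin 2) ℤ))
def recPz : Fin 4 → Matrix Q8 Q8 ℤ :=
  ![1, pXz ⊗ₖ ((1 : Matrix (Fin 2) (Fin 2) ℤ) ⊗ₖ 1),
    (1 : Matrix (Fin 2) (Fin 2) ℤ) ⊗ₖ (pXz ⊗ₖ 1),
    (1 : Matrix (Fin 2) (Fin 2) ℤ) ⊗ₖ ((1 : Matrix (Fin 2) (Fin 2) ℤ) ⊗ₖ pXz)]
def sgnz : Fin 4 → Fin 2 → ℤ := ![![1, 1], ![1, -1], ![-1, -1], ![-1, 1]]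
def Bz (m : Fin 4) : Matrix Q8 Q8 ℤ :=
  recPz m * ((1 + sgnz m 0 • S₁z) * (1 + sgnz m 1 • S₂z))
def Qz : Matrix Q8 Q8 ℤ := (1 + S₁z) * (1 + S₂z)
def Dz (m n : Fin 4) : Matrix Q8 Q8 ℤ := (Bz m)ᵀ * Bz n

theorem hBQ : ∀ m : Fin 4, Bz m = Qz * recPz m := by decide
theorem hQT : Qzᵀ = Qz := by decide
theorem hPT : ∀ m : Fin 4, (recPz m)ᵀ = recPz m := by decide
theorem hQQ : Qz * Qz = (4 : ℤ) • Qz := by decide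
theorem hQPPQ : ∀ n p : Fin 4, (Qz * recPz n) * (recPz p * Qz) =
    if n = p then (4 : ℤ) • Qz else 0 := by decide
theorem hDtr : ∀ m n : Fin 4, (Dz m n).trace = if m = n then 32 else 0 := by decide

theorem hD (m n : Fin 4) : Dz m n = (recPz m * Qz) * (Qz * recPz n) := by
  rw [Dz, hBQ m, hBQ n, Matrix.transpose_mul, hQT, hPT, Matrix.mul_assoc]

theorem f1 (m n p q : Fin 4) :
    Dz m n * Dz p q = if n = p then (16 : ℤ) • Dz m q else 0 := by
  rw [hD m n, hD p q, hD m q]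
  calc ((recPz m * Qz) * (Qz * recPz n)) * ((recPz p * Qz) * (Qz * recPz q))
      = (recPz m * Qz) * (((Qz * recPz n) * (recPz p * Qz)) * (Qz * recPz q)) := by
        simp only [Matrix.mul_assoc]
    _ = if n = p then (16 : ℤ) • ((recPz m * Qz) * (Qz * recPz q)) else 0 := by
        rw [hQPPQ n p]
        by_cases h : n = p
        · simp only [if_pos h, Matrix.smul_mul, Matrix.mul_smul, smul_smul]
          rw [← Matrix.mul_assoc Qz Qz (recPz q), hQQ]
          simp only [Matrix.smul_mul, Matrix.mul_smul, smul_smul]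
          norm_num
        · simp [if_neg h]

-- lifting ℤ → ℂ
noncomputable def lift {l m : Type*} (A : Matrix l m ℤ) : Matrix l m ℂ :=
  A.map (Int.cast : ℤ → ℂ)

theorem lift_kron {l m n p : Type*} (A : Matrix l m ℤ) (B : Matrix n p ℤ) :
    lift (A ⊗ₖ B) = lift A ⊗ₖ lift B := by
  ext ⟨i, j⟩ ⟨k, l⟩
  simp [lift, Matrix.kroneckerMap_apply, Matrix.map_apply]

theorem lift_mul {l : Type*} [Fintype l] [DecidableEq l] (A B : Matrix l l ℤ) :
    lift (A * B) = lift A * lift B := by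
  simpa [lift, Int.coe_castRingHom] using
    (Matrix.map_mul (L := A) (M := B) (f := Int.castRingHom ℂ))

theorem lift_add {l m : Type*} (A B : Matrix l m ℤ) : lift (A + B) = lift A + lift B := by
  ext i j; simp [lift, Matrix.map_apply]

theorem lift_one {l : Type*} [Fintype l] [DecidableEq l] :
    lift (1 : Matrix l l ℤ) = 1 :=
  Matrix.map_one _ (by simp) (by simp)

theorem lift_smul {l m : Type*} (z : ℤ) (A : Matrix l m ℤ) :
    lift (z • A) = (z : ℂ) • lift A := by
  ext i j; simp [lift, Matrix.map_apply]

theorem lift_transpose {l m : Type*} (A : Matrix l m ℤ) : lift Aᵀ = (lift A)ᵀ := by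
  ext i j; simp [lift, Matrix.map_apply]

theorem lift_conjTranspose {l m : Type*} (A : Matrix l m ℤ) : (lift A)ᴴ = lift Aᵀ := by
  ext i j; simp [lift, Matrix.map_apply, Matrix.conjTranspose_apply]

theorem lift_star {l m : Type*} (A : Matrix l m ℤ) : (lift A).map star = lift A := by
  ext i j; simp [lift, Matrix.map_apply]

theorem lift_zero {l m : Type*} : lift (0 : Matrix l m ℤ) = 0 := by
  ext i j; simp [lift, Matrix.map_apply]

theorem lift_trace {l : Type*} [Fintype l] (A : Matrix l l ℤ) :
    (lift A).trace = ((A.trace : ℤ) : ℂ) := by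
  simp [lift, Matrix.trace, Matrix.diag, Matrix.map_apply]

theorem hpX : pX = lift pXz := by
  ext i j
  fin_cases i <;> fin_cases j <;> simp [pX, pXz, lift, Matrix.map_apply]

theorem hpZ : pZ = lift pZz := by
  ext i j
  fin_cases i <;> fin_cases j <;> simp [pZ, pZz, lift, Matrix.map_apply]

theorem hS₁ : S₁ = lift S₁z := by
  rw [S₁, S₁z, lift_kron, lift_kron, lift_one, hpZ]

theorem hS₂ : S₂ = lift S₂z := by
  rw [S₂, S₂z, lift_kron, lift_kron, lift_one, hpZ]

theorem hsgn : ∀ m : Fin 4, ∀ i : Fin 2, sgn m i = ((sgnz m i : ℤ) : ℂ) := by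
  intro m i
  fin_cases m <;> fin_cases i <;> norm_num [sgn, sgnz]

theorem hrecP : ∀ m : Fin 4, recP m = lift (recPz m) := by
  intro m
  fin_cases m
  · exact lift_one.symm
  · show pX ⊗ₖ _ = lift (pXz ⊗ₖ _)
    simp [lift_kron, lift_one, hpX]
  · show _ ⊗ₖ (pX ⊗ₖ _) = lift (_ ⊗ₖ (pXz ⊗ₖ _))
    simp [lift_kron, lift_one, hpX]
  · show _ ⊗ₖ (_ ⊗ₖ pX) = lift (_ ⊗ₖ (_ ⊗ₖ pXz))
    simp [lift_kron, lift_one, hpX]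

theorem hkraus (m : Fin 4) : kraus3 m = (4 : ℂ)⁻¹ • lift (Bz m) := by
  rw [kraus3, Proj3, Bz, lift_mul, lift_mul, hrecP m, mul_smul_comm]
  congr 2
  rw [lift_add, lift_add, lift_one, lift_smul, lift_smul, hS₁, hS₂, hsgn, hsgn]

theorem hstar (m : Fin 4) : (kraus3 m).map star = kraus3 m := by
  rw [hkraus]
  ext i j
  simp [Matrix.map_apply, Matrix.smul_apply, smul_eq_mul, lift, star_mul', map_ofNat]

noncomputable def TC (p : Fin 4 × Fin 4) : Matrix (Q8 × Q8) (Q8 × Q8) ℂ :=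
  lift (Dz p.1 p.2 ⊗ₖ Dz p.1 p.2)

theorem hA : (∑ m : Fin 4, (kraus3 m).map star ⊗ₖ kraus3 m) =
    (16 : ℂ)⁻¹ • ∑ m : Fin 4, lift (Bz m ⊗ₖ Bz m) := by
  rw [Finset.smul_sum]
  refine Finset.sum_congr rfl fun m _ => ?_
  rw [hstar, hkraus, smul_kronecker, kronecker_smul, smul_smul, lift_kron]
  norm_num

theorem hG : (∑ m : Fin 4, (kraus3 m).map star ⊗ₖ kraus3 m)ᴴ *
    (∑ m : Fin 4, (kraus3 m).map star ⊗ₖ kraus3 m) =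
    (256 : ℂ)⁻¹ • ∑ p : Fin 4 × Fin 4, TC p := by
  rw [hA, Matrix.conjTranspose_smul, Matrix.conjTranspose_sum,
    smul_mul_smul_comm, Finset.sum_mul_sum]
  have hterm : ∀ m n : Fin 4, (lift (Bz m ⊗ₖ Bz m))ᴴ * lift (Bz n ⊗ₖ Bz n) = TC (m, n) := by
    intro m n
    rw [lift_conjTranspose, ← lift_mul, ← kroneckerMap_transpose, ← mul_kronecker_mul, TC]
    rfl
  have : star (16 : ℂ)⁻¹ * (16 : ℂ)⁻¹ = (256 : ℂ)⁻¹ := by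
    simp; norm_num
  rw [this]
  congr 1
  rw [Fintype.sum_prod_type]
  exact Finset.sum_congr rfl fun m _ => Finset.sum_congr rfl fun n _ => hterm m n

theorem hTmul (p q : Fin 4 × Fin 4) :
    TC p * TC q = if p.2 = q.1 then (256 : ℂ) • TC (p.1, q.2) else 0 := by
  rw [TC, TC, TC, ← lift_mul, ← mul_kronecker_mul, f1]
  by_cases h : p.2 = q.1
  · rw [if_pos h, if_pos h, smul_kronecker, kronecker_smul, smul_smul, lift_smul]
    norm_num
  · rw [if_neg h, if_neg h, zero_kronecker, lift_zero]

theorem hSsq : (∑ p : Fin 4 × Fin 4, TC p) * (∑ p : Fin 4 × Fin 4, TC p) =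
    (1024 : ℂ) • ∑ p : Fin 4 × Fin 4, TC p := by
  rw [Finset.sum_mul_sum]
  calc ∑ p : Fin 4 × Fin 4, ∑ q : Fin 4 × Fin 4, TC p * TC q
      = ∑ p : Fin 4 × Fin 4, (256 : ℂ) • ∑ n : Fin 4, TC (p.1, n) := by
        refine Finset.sum_congr rfl fun p _ => ?_
        rw [Fintype.sum_prod_type]
        have h1 : ∀ q1 : Fin 4, (∑ q2 : Fin 4, TC p * TC (q1, q2)) =
            if p.2 = q1 then ∑ q2 : Fin 4, (256 : ℂ) • TC (p.1, q2) else 0 := by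
          intro q1
          by_cases h : p.2 = q1
          · rw [if_pos h]
            refine Finset.sum_congr rfl fun q2 _ => ?_
            rw [hTmul]
            simp [h]
          · rw [if_neg h]
            simp [hTmul, h]
        rw [Finset.sum_congr rfl fun q1 _ => h1 q1, Finset.sum_ite_eq]
        simp [Finset.smul_sum]
    _ = (1024 : ℂ) • ∑ p : Fin 4 × Fin 4, TC p := by
        rw [← Finset.smul_sum, Fintype.sum_prod_type]
        have h2 : ∀ p1 : Fin 4, (∑ _p2 : Fin 4, ∑ n : Fin 4, TC (p1, n)) =
            (4 : ℂ) • ∑ n : Fin 4, TC (p1, n) := by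
          intro p1
          rw [Finset.sum_const, ← Nat.cast_smul_eq_nsmul ℂ]
          norm_num
        rw [Finset.sum_congr rfl fun p1 _ => h2 p1, ← Finset.smul_sum, smul_smul,
          ← Fintype.sum_prod_type]
        norm_num

theorem hTrS : (∑ p : Fin 4 × Fin 4, TC p).trace = 4096 := by
  rw [Matrix.trace_sum]
  have h1 : ∀ p : Fin 4 × Fin 4, (TC p).trace = if p.1 = p.2 then (1024 : ℂ) else 0 := by
    intro p
    rw [TC, lift_trace, Matrix.trace_kronecker, hDtr]
    by_cases h : p.1 = p.2 <;> simp [h]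
  rw [Finset.sum_congr rfl fun p _ => h1 p, Fintype.sum_prod_type]
  simp [Finset.sum_ite_eq]
  norm_num

theorem eval_cp {N : Type*} [Fintype N] [DecidableEq N] (M : Matrix N N ℂ) (z : ℂ) :
    M.charpoly.eval z = (z • (1 : Matrix N N ℂ) - M).det := by
  rw [Matrix.charpoly, eval_det, matPolyEquiv_charmatrix, Polynomial.eval_sub,
    Polynomial.eval_X, Polynomial.eval_C, Matrix.scalar_apply, Matrix.smul_one_eq_diagonal]

theorem roots_mem {N : Type*} [Fintype N] [DecidableEq N] (M : Matrix N N ℂ)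
    (hM : M * M = (4 : ℂ) • M) : ∀ z ∈ M.charpoly.roots, z = 0 ∨ z = 4 := by
  intro z hz
  have hroot : M.charpoly.IsRoot z := (Polynomial.mem_roots'.mp hz).2
  have hdet : (z • (1 : Matrix N N ℂ) - M).det = 0 := by
    rw [← eval_cp]; exact hroot
  obtain ⟨v, hv, hmul⟩ := (Matrix.exists_mulVec_eq_zero_iff).mpr hdet
  have hMv : M.mulVec v = z • v := by
    have := hmul
    rw [Matrix.sub_mulVec, Matrix.smul_mulVec, Matrix.one_mulVec, sub_eq_zero] at this
    exact this.symm
  have h2 : (z * z) • v = (4 * z) • v := by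
    have e1 : (M * M).mulVec v = (z * z) • v := by
      rw [← Matrix.mulVec_mulVec, hMv, Matrix.mulVec_smul, hMv, smul_smul]
    have e2 : (M * M).mulVec v = (4 * z) • v := by
      rw [hM, Matrix.smul_mulVec, hMv, smul_smul]
    rw [← e1, e2]
  obtain ⟨i, hi⟩ := Function.ne_iff.mp hv
  have h3 : (z * z) * v i = (4 * z) * v i := congrFun h2 i
  have h4 : z * z = 4 * z := mul_right_cancel₀ hi h3
  have h5 : z * (z - 4) = 0 := by linear_combination h4
  rcases mul_eq_zero.mp h5 with h | h
  · exact Or.inl h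
  · exact Or.inr (sub_eq_zero.mp h)

end BitAux

/-- The superoperator `Σ_m A_m* ⊗ A_m` of the perfect error-correcting channel of the
three-qubit bit-flip code has singular values `2` with multiplicity `4` and `0` with
multiplicity `60`. -/
theorem bitflip_code_singular_values :
    singularValues (∑ m : Fin 4, (kraus3 m).map star ⊗ₖ kraus3 m) =
      Multiset.replicate 4 2 + Multiset.replicate 60 0 := by
  classical
  set A := ∑ m : Fin 4, (kraus3 m).map star ⊗ₖ kraus3 m with hAdef
  set G := Aᴴ * A with hGdef
  have hGS : G = (256 : ℂ)⁻¹ • ∑ p : Fin 4 × Fin 4, BitAux.TC p := BitAux.hG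
  have hGG : G * G = (4 : ℂ) • G := by
    rw [hGS, smul_mul_smul_comm, BitAux.hSsq, smul_smul, smul_smul]
    norm_num
  have hTr : G.trace = 16 := by
    rw [hGS, Matrix.trace_smul, BitAux.hTrS]
    norm_num
  have hmem := BitAux.roots_mem G hGG
  have hdeg : G.charpoly.natDegree = 64 := by
    rw [Matrix.charpoly_natDegree_eq_dim]
    simp
  have hcard : Multiset.card G.charpoly.roots = 64 := by
    rw [← hdeg]
    exact Polynomial.splits_iff_card_roots.mp (IsAlgClosed.splits G.charpoly)
  have hsum : G.charpoly.roots.sum = 16 := by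
    rw [← Matrix.trace_eq_sum_roots_charpoly]
    exact hTr
  set r := G.charpoly.roots with hr
  have hfilter := Multiset.filter_add_not (fun x => x = 4) r
  set k := Multiset.count 4 r with hk
  have h4 : Multiset.filter (fun x => x = 4) r = Multiset.replicate k 4 :=
    Multiset.filter_eq' r 4
  have hcard2 : Multiset.card (Multiset.filter (fun x => ¬ x = 4) r) = 64 - k := by
    have hc := congrArg Multiset.card hfilter
    rw [Multiset.card_add, h4, Multiset.card_replicate, hcard] at hc
    omega
  have h0 : Multiset.filter (fun x => ¬ x = 4) r = Multiset.replicate (64 - k) 0 := by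
    rw [Multiset.eq_replicate]
    refine ⟨hcard2, fun b hb => ?_⟩
    have hbr : b ∈ r := Multiset.mem_of_mem_filter hb
    have hb4 : ¬ b = 4 := (Multiset.mem_filter.mp hb).2
    rcases hmem b hbr with h | h
    · exact h
    · exact absurd h hb4
  have hksum : (k : ℂ) * 4 = 16 := by
    have hs := hsum
    rw [← hfilter, Multiset.sum_add, h4, h0, Multiset.sum_replicate, Multiset.sum_replicate] at hs
    simpa [nsmul_eq_mul] using hs
  have hk4 : k = 4 := by
    have hc : (k : ℂ) = ((4 : ℕ) : ℂ) := by
      have h4ne : (4 : ℂ) ≠ 0 := by norm_num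
      have := mul_right_cancel₀ h4ne (hksum.trans (by norm_num : (16 : ℂ) = ((4:ℕ):ℂ) * 4))
      exact this
    exact_mod_cast hc
  have hrdecomp : r = Multiset.replicate 4 4 + Multiset.replicate 60 0 := by
    rw [← hfilter, h4, h0, hk4]
  have hsv : singularValues A = r.map fun z => Real.sqrt z.re := rfl
  rw [hsv, hrdecomp, Multiset.map_add, Multiset.map_replicate, Multiset.map_replicate]
  have e4 : Real.sqrt (4 : ℂ).re = 2 := by
    have : ((4 : ℂ)).re = (4 : ℝ) := by norm_num
    rw [this, show (4 : ℝ) = 2 ^ 2 by norm_num, Real.sqrt_sq (by norm_num : (0:ℝ) ≤ 2)]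
  have e0 : Real.sqrt (0 : ℂ).re = 0 := by simp
  rw [e4, e0]
end
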